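/- Let G be a finite simple graph, let k ≥ 2 be an integer with χ(G) ≥ k, let m be a positive integer, and let H be a spanning subgraph of the blow-up G^m with the following property: for every edge uv of G and every pair of subsets W ⊆ {u} × {1,…,m} and U ⊆ {v} × {1,…,m} with |W| ≥ m/(k−1) and |U| ≥ m/(k−1), there is an edge of H joining some vertex of W to some vertex of U. Then χ(H) ≥ k, i.e., H admits no proper colouring with k−1 colours. -/
import Mathlib


/-- The blow-up `G^m` of a graph `G`. -/
def SimpleGraph.blowup {V : Type} (G : SimpleGraph V) (m : ℕ) : SimpleGraph (V × Fin m) :=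
  G.comap Prod.fst

/-- If `χ(G) ≥ k` and `H` is a spanning subgraph of the blow-up `G^m` such that for every
edge `uv` of `G`, any two subsets of the fibres over `u` and `v` of size at least
`m/(k-1)` are joined by an edge of `H`, then `χ(H) ≥ k`, i.e. `H` has no proper colouring
with `k-1` colours. -/
theorem subsampled_blowup_chromatic {V : Type} [Fintype V] (G : SimpleGraph V)
    (k : ℕ) (hk : 2 ≤ k) (hχ : (k : ℕ∞) ≤ G.chromaticNumber)
    (m : ℕ) (hm : 0 < m)
    (H : SimpleGraph (V × Fin m)) (hH : H ≤ G.blowup m)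
    (hedges : ∀ u v : V, G.Adj u v →
      ∀ W U : Finset (V × Fin m),
        (∀ w ∈ W, w.1 = u) → (∀ x ∈ U, x.1 = v) →
        (m : ℝ) / ((k : ℝ) - 1) ≤ (W.card : ℝ) →
        (m : ℝ) / ((k : ℝ) - 1) ≤ (U.card : ℝ) →
        ∃ w ∈ W, ∃ x ∈ U, H.Adj w x) :
    ¬ H.Colorable (k - 1) := by
  intro hcol
  obtain ⟨c⟩ := hcol
  have hk1 : 1 ≤ k := by omega
  -- majority colour in each fibre
  have hmaj : ∀ u : V, ∃ i : Fin (k - 1),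
      m ≤ (k - 1) * (Finset.univ.filter (fun j : Fin m => c (u, j) = i)).card := by
    intro u
    by_contra h
    push_neg at h
    have hsum : (Finset.univ : Finset (Fin m)).card =
        ∑ i : Fin (k - 1), (Finset.univ.filter (fun j : Fin m => c (u, j) = i)).card :=
      Finset.card_eq_sum_card_fiberwise (fun x _ => Finset.mem_univ _)
    have hle : (k - 1) * m ≤ (k - 1) * (m - 1) := by
      calc (k - 1) * m = ∑ i : Fin (k - 1),
            (k - 1) * (Finset.univ.filter (fun j : Fin m => c (u, j) = i)).card := by
            rw [← Finset.mul_sum, ← hsum, Finset.card_univ, Fintype.card_fin]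
        _ ≤ ∑ _i : Fin (k - 1), (m - 1) :=
            Finset.sum_le_sum (fun i _ => by have := h i; omega)
        _ = (k - 1) * (m - 1) := by
            simp [Finset.sum_const, Finset.card_univ, mul_comm]
    have := Nat.le_of_mul_le_mul_left hle (by omega : 0 < k - 1)
    omega
  choose f hf using hmaj
  -- f is a proper colouring of G
  classical
  have hproper : ∀ u v : V, G.Adj u v → f u ≠ f v := by
    intro u v hadj hfe
    have injW : Function.Injective (fun j : Fin m => ((u, j) : V × Fin m)) :=
      fun a b hab => by simpa using hab
    have injU : Function.Injective (fun j : Fin m => ((v, j) : V × Fin m)) :=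
      fun a b hab => by simpa using hab
    have hkpos : (0 : ℝ) < (k : ℝ) - 1 := by
      have : (2 : ℝ) ≤ (k : ℝ) := by exact_mod_cast hk
      linarith
    have key : ∀ n : ℕ, m ≤ (k - 1) * n → (m : ℝ) / ((k : ℝ) - 1) ≤ (n : ℝ) := by
      intro n hn
      rw [div_le_iff₀ hkpos]
      have : (m : ℝ) ≤ ((k - 1 : ℕ) : ℝ) * n := by exact_mod_cast hn
      rw [Nat.cast_sub hk1] at this
      push_cast at this ⊢
      linarith
    obtain ⟨w, hw, x, hx, hwx⟩ := hedges u v hadj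
      ((Finset.univ.filter (fun j : Fin m => c (u, j) = f u)).image (fun j => (u, j)))
      ((Finset.univ.filter (fun j : Fin m => c (v, j) = f v)).image (fun j => (v, j)))
      (fun w hw => by
        obtain ⟨j, _, rfl⟩ := Finset.mem_image.mp hw; rfl)
      (fun x hx => by
        obtain ⟨j, _, rfl⟩ := Finset.mem_image.mp hx; rfl)
      (by rw [Finset.card_image_of_injective _ injW]; exact key _ (hf u))
      (by rw [Finset.card_image_of_injective _ injU]; exact key _ (hf v))
    obtain ⟨j, hj, rfl⟩ := Finset.mem_image.mp hw
    obtain ⟨j', hj', rfl⟩ := Finset.mem_image.mp hx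
    have hcw : c (u, j) = f u := (Finset.mem_filter.mp hj).2
    have hcx : c (v, j') = f v := (Finset.mem_filter.mp hj').2
    exact c.valid hwx (by rw [hcw, hcx, hfe])
  have hGcol : G.Colorable (k - 1) :=
    ⟨SimpleGraph.Coloring.mk f (fun {a b} h => hproper a b h)⟩
  have hle : G.chromaticNumber ≤ (k - 1 : ℕ) := hGcol.chromaticNumber_le
  have h1 : (k : ℕ∞) ≤ ((k - 1 : ℕ) : ℕ∞) := le_trans hχ hle
  have h2 : k ≤ k - 1 := by exact_mod_cast h1
  omega
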